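/- Let μ, ξ > 0 and q real, and suppose λ₁ = √(q² + ξ/μ), λ₂ = √(q² + ξ/(2μ)). For any boundary data (T₁, T₂) ∈ ℂ², the linear system in unknowns (A, B) given by matching the stress boundary conditions for the combination v = A·∇⊥(e^{iqx+λ₁y}) + B·∇(e^{iqx+λ₂y}) at y = 0, namely μ(∂ₓv_y + ∂ᵧvₓ)|_{y=0} = T₁e^{iqx} and 2μ∂ᵧv_y|_{y=0} = T₂e^{iqx}, has a unique solution whenever q ≠ 0; explicitly, the determinant of the 2×2 coefficient matrix equals D(q) = 4μ²q²λ₂λ₁ − (2μq² + ξ)², which is nonzero. -/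

import Mathlib

noncomputable def Ddet (μ ξ q : ℝ) : ℝ :=
  4 * μ ^ 2 * q ^ 2 * Real.sqrt (q ^ 2 + ξ / (2 * μ)) * Real.sqrt (q ^ 2 + ξ / μ)
    - (2 * μ * q ^ 2 + ξ) ^ 2

lemma solve2 (a b c d : ℂ) (h : a * d - b * c ≠ 0) (T₁ T₂ : ℂ) :
    ∃! AB : ℂ × ℂ, a * AB.1 + b * AB.2 = T₁ ∧ c * AB.1 + d * AB.2 = T₂ := by
  refine ⟨⟨(d * T₁ - b * T₂) / (a * d - b * c), (a * T₂ - c * T₁) / (a * d - b * c)⟩,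
    ⟨?_, ?_⟩, ?_⟩
  · field_simp; ring
  · rw [mul_div_assoc', mul_div_assoc', ← add_div, div_eq_iff h]; ring
  · rintro ⟨x, y⟩ ⟨e1, e2⟩
    simp only [Prod.mk.injEq]
    constructor
    · simp only at e1 e2
      rw [eq_div_iff h]
      linear_combination d * e1 - b * e2
    · simp only at e1 e2
      rw [eq_div_iff h]
      linear_combination a * e2 - c * e1

/-- The 2×2 system matching the stress boundary conditions for
v = A∇⊥(e^{iqx+λ₁y}) + B∇(e^{iqx+λ₂y}) has determinant D(q) = 4μ²q²λ₂λ₁ − (2μq²+ξ)² ≠ 0,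
hence a unique solution for q ≠ 0. -/
theorem stress_matching_unique (μ ξ q : ℝ) (hμ : 0 < μ) (hξ : 0 < ξ)
    (lam₁ lam₂ : ℝ) (h₁ : lam₁ = Real.sqrt (q ^ 2 + ξ / μ))
    (h₂ : lam₂ = Real.sqrt (q ^ 2 + ξ / (2 * μ))) :
    (((-(μ * (lam₁ ^ 2 + q ^ 2)) : ℝ) : ℂ) * ((2 * μ * lam₂ ^ 2 : ℝ) : ℂ)
        - (2 * Complex.I * (q : ℂ) * (μ : ℂ) * (lam₂ : ℂ)) *
          (2 * Complex.I * (q : ℂ) * (μ : ℂ) * (lam₁ : ℂ))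
      = ((Ddet μ ξ q : ℝ) : ℂ)) ∧
    ((Ddet μ ξ q : ℝ) : ℂ) ≠ 0 ∧
    (q ≠ 0 → ∀ T₁ T₂ : ℂ, ∃! AB : ℂ × ℂ,
      ((-(μ * (lam₁ ^ 2 + q ^ 2)) : ℝ) : ℂ) * AB.1
          + (2 * Complex.I * (q : ℂ) * (μ : ℂ) * (lam₂ : ℂ)) * AB.2 = T₁ ∧
      (2 * Complex.I * (q : ℂ) * (μ : ℂ) * (lam₁ : ℂ)) * AB.1
          + ((2 * μ * lam₂ ^ 2 : ℝ) : ℂ) * AB.2 = T₂) := by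
  have hl1 : lam₁ ^ 2 = q ^ 2 + ξ / μ := by
    rw [h₁, Real.sq_sqrt]; positivity
  have hl2 : lam₂ ^ 2 = q ^ 2 + ξ / (2 * μ) := by
    rw [h₂, Real.sq_sqrt]; positivity
  have hl1n : 0 ≤ lam₁ := h₁ ▸ Real.sqrt_nonneg _
  have hl2n : 0 ≤ lam₂ := h₂ ▸ Real.sqrt_nonneg _
  have hA : μ * (lam₁ ^ 2 + q ^ 2) = 2 * μ * q ^ 2 + ξ := by
    rw [hl1]; field_simp; ring
  have hB : 2 * μ * lam₂ ^ 2 = 2 * μ * q ^ 2 + ξ := by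
    rw [hl2]; field_simp
  have hD : Ddet μ ξ q = 4 * μ ^ 2 * q ^ 2 * lam₂ * lam₁ - (2 * μ * q ^ 2 + ξ) ^ 2 := by
    rw [Ddet, ← h₁, ← h₂]
  have hEq : (((-(μ * (lam₁ ^ 2 + q ^ 2)) : ℝ) : ℂ) * ((2 * μ * lam₂ ^ 2 : ℝ) : ℂ)
        - (2 * Complex.I * (q : ℂ) * (μ : ℂ) * (lam₂ : ℂ)) *
          (2 * Complex.I * (q : ℂ) * (μ : ℂ) * (lam₁ : ℂ))
      = ((Ddet μ ξ q : ℝ) : ℂ)) := by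
    rw [hD]
    push_cast [hA, hB]
    linear_combination (-4 * (q : ℂ) ^ 2 * (μ : ℂ) ^ 2 * (lam₂ : ℂ) * (lam₁ : ℂ)) *
      Complex.I_sq
  have hDneg : Ddet μ ξ q < 0 := by
    rw [hD]
    nlinarith [sq_nonneg (lam₁ - lam₂), sq_nonneg q, mul_pos hμ hξ,
      mul_nonneg (mul_nonneg (sq_nonneg μ) (sq_nonneg q)) (sq_nonneg (lam₁ - lam₂)),
      sq_nonneg (μ * q)]
  have hDne : ((Ddet μ ξ q : ℝ) : ℂ) ≠ 0 := by
    exact_mod_cast Complex.ofReal_ne_zero.mpr (ne_of_lt hDneg)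
  refine ⟨hEq, hDne, fun _ T₁ T₂ => solve2 _ _ _ _ ?_ T₁ T₂⟩
  rw [hEq]
  exact hDne
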